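/- arXiv:1407.8287 — 3 statements merged into one kernel-verified Lean document; each statement's English description precedes it below -/
import Mathlib

section
/- Let q ≥ 2 and b ≥ 2 be integers, let (x_n)_{n≥0} be the van der Corput sequence in base b, and for k ∈ ℕ set T_k(N) := (1/N) Σ_{n=0}^{N−1} exp(2πi · s_q(n) · φ_b(k)), where φ_b is the radical inverse function. Then for every m ∈ ℕ₀, T_k(q^m) = (T_k(q))^m. -/
open Finset Real

/-- The radical inverse function `φ_b` in base `b`. -/
noncomputable def radInv (b n : ℕ) : ℝ :=
  ∑ i ∈ Finset.range (Nat.digits b n).length,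
    ((Nat.digits b n).getD i 0 : ℝ) / (b : ℝ) ^ (i + 1)

/-- `T_k(N) = (1/N) Σ_{n=0}^{N−1} exp(2πi · s_q(n) · φ_b(k))`. -/
noncomputable def Texp (q b k N : ℕ) : ℂ :=
  (N : ℂ)⁻¹ * ∑ n ∈ Finset.range N,
    Complex.exp (2 * Real.pi * Complex.I * ((Nat.digits q n).sum : ℂ) * (radInv b k : ℂ))

lemma digitsum_add_mul (q : ℕ) (hq : 2 ≤ q) (a r : ℕ) (ha : a < q) :
    (Nat.digits q (a + q * r)).sum = a + (Nat.digits q r).sum := by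
  rcases Nat.eq_zero_or_pos (a + q * r) with h | h
  · have ha0 : a = 0 := by omega
    have hr0 : r = 0 := by nlinarith
    simp [ha0, hr0]
  · rw [Nat.digits_def' (by omega : 1 < q) h]
    have h1 : (a + q * r) % q = a := by
      rw [Nat.add_mul_mod_self_left, Nat.mod_eq_of_lt ha]
    have h2 : (a + q * r) / q = r := by
      rw [Nat.add_mul_div_left _ _ (by omega : 0 < q), Nat.div_eq_of_lt ha, Nat.zero_add]
    simp [h1, h2]

lemma digitsum_lt (q : ℕ) (hq : 2 ≤ q) (a : ℕ) (ha : a < q) :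
    (Nat.digits q a).sum = a := by
  rcases Nat.eq_zero_or_pos a with h | h
  · simp [h]
  · rw [Nat.digits_def' (by omega : 1 < q) h, Nat.mod_eq_of_lt ha, Nat.div_eq_of_lt ha]
    simp

lemma sum_split (q M : ℕ) (f : ℕ → ℂ) (hq : 0 < q) :
    ∑ p ∈ Finset.range q ×ˢ Finset.range M, f (p.1 + q * p.2)
      = ∑ n ∈ Finset.range (q * M), f n := by
  refine Finset.sum_nbij' (fun p => p.1 + q * p.2) (fun n => (n % q, n / q)) ?_ ?_ ?_ ?_ ?_
  · rintro ⟨a, r⟩ hp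
    simp only [Finset.mem_product, Finset.mem_range] at hp
    simp only [Finset.mem_range]
    calc a + q * r < q + q * r := by omega
    _ = q * (r + 1) := by ring
    _ ≤ q * M := Nat.mul_le_mul_left q hp.2
  · rintro n hn
    simp only [Finset.mem_range] at hn
    simp only [Finset.mem_product, Finset.mem_range]
    refine ⟨Nat.mod_lt _ hq, Nat.div_lt_of_lt_mul ?_⟩
    omega
  · rintro ⟨a, r⟩ hp
    simp only [Finset.mem_product, Finset.mem_range] at hp
    simp [Nat.add_mul_mod_self_left, Nat.mod_eq_of_lt hp.1,
      Nat.add_mul_div_left _ _ hq, Nat.div_eq_of_lt hp.1]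
  · intro n hn
    simp [Nat.mod_add_div]
  · intro p hp
    rfl

/-- For the van der Corput sequence `x_n = φ_b(n)` in base `b ≥ 2` and the
exponential sums `T_k` along the `q`-ary sum-of-digits function, one has
`T_k(q^m) = (T_k(q))^m` for every `m`. -/
theorem Texp_pow (q b : ℕ) (hq : 2 ≤ q) (hb : 2 ≤ b) (k : ℕ) (m : ℕ) :
    Texp q b k (q ^ m) = (Texp q b k q) ^ m := by
  induction m with
  | zero => simp [Texp]
  | succ m ih =>
    have hsplit : ∑ n ∈ Finset.range (q ^ (m+1)),
        Complex.exp (2 * Real.pi * Complex.I * ((Nat.digits q n).sum : ℂ) * (radInv b k : ℂ))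
        = (∑ a ∈ Finset.range q,
            Complex.exp (2 * Real.pi * Complex.I * ((Nat.digits q a).sum : ℂ) * (radInv b k : ℂ)))
          * ∑ r ∈ Finset.range (q ^ m),
            Complex.exp (2 * Real.pi * Complex.I * ((Nat.digits q r).sum : ℂ) * (radInv b k : ℂ)) := by
      have hpow : q ^ (m+1) = q * q ^ m := by ring
      rw [hpow, ← sum_split q _ _ (by omega), Finset.sum_product, Finset.sum_mul_sum]
      refine Finset.sum_congr rfl fun a ha => Finset.sum_congr rfl fun r hr => ?_
      rw [digitsum_add_mul q hq a r (Finset.mem_range.mp ha), ← Complex.exp_add,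
        digitsum_lt q hq a (Finset.mem_range.mp ha)]
      push_cast
      ring_nf
    have hq0 : (q : ℂ) ≠ 0 := by
      simp only [ne_eq, Nat.cast_eq_zero]
      omega
    have hqm0 : ((q : ℂ)) ^ m ≠ 0 := pow_ne_zero _ hq0
    conv_rhs => rw [pow_succ, ← ih]
    unfold Texp
    rw [hsplit]
    push_cast
    field_simp
    simp only [mul_comm, mul_left_comm, mul_assoc]
    ring
end

section
/- Let q ≥ 2 be an integer and θ ∈ ℝ. Then |(1/q) Σ_{n=0}^{q−1} exp(2πi n θ)|² ≤ 1 − (16(q−1)/q²)·‖θ‖², where ‖θ‖ denotes the distance from θ to the nearest integer. -/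
open Finset Real

private lemma term_re (θ : ℝ) (n q : ℕ) :
    (Complex.exp (2 * Real.pi * Complex.I * (n : ℂ) * (θ : ℂ)) *
      (starRingEnd ℂ) (Complex.exp (2 * Real.pi * Complex.I * (q : ℂ) * (θ : ℂ)))).re
    = Real.cos (2 * π * ((n : ℝ) - q) * θ) := by
  rw [← Complex.exp_conj, ← Complex.exp_add]
  have h1 : (starRingEnd ℂ) (2 * Real.pi * Complex.I * (q : ℂ) * (θ : ℂ))
      = -((2 * Real.pi * q * θ : ℝ) : ℂ) * Complex.I := by
    have : (2 * Real.pi * Complex.I * (q : ℂ) * (θ : ℂ)) = ((2 * Real.pi * q * θ : ℝ) : ℂ) * Complex.I := by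
      push_cast; ring
    rw [this, map_mul, Complex.conj_I, Complex.conj_ofReal]; ring
  rw [h1]
  have h2 : 2 * Real.pi * Complex.I * (n : ℂ) * (θ : ℂ) + -((2 * Real.pi * q * θ : ℝ) : ℂ) * Complex.I
      = ((2 * Real.pi * ((n:ℝ) - q) * θ : ℝ) : ℂ) * Complex.I := by
    push_cast; ring
  rw [h2, Complex.exp_ofReal_mul_I_re]

private lemma term_normSq (θ : ℝ) (q : ℕ) :
    Complex.normSq (Complex.exp (2 * Real.pi * Complex.I * (q : ℂ) * (θ : ℂ))) = 1 := by
  have : (2 * Real.pi * Complex.I * (q : ℂ) * (θ : ℂ)) = ((2 * Real.pi * q * θ : ℝ) : ℂ) * Complex.I := by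
    push_cast; ring
  rw [this, Complex.normSq_eq_norm_sq, Complex.norm_exp_ofReal_mul_I, one_pow]

private lemma sin_lower (θ : ℝ) : 2 * |θ - round θ| ≤ |Real.sin (π * θ)| := by
  set u := θ - round θ with hu
  have hsin : |Real.sin (π * θ)| = |Real.sin (π * u)| := by
    have h : π * θ = π * u + (round θ) * π := by rw [hu]; ring
    rw [h, Real.sin_add_int_mul_pi, abs_mul]
    rcases Int.even_or_odd (round θ) with h2 | h2
    · rw [h2.neg_one_zpow, abs_one, one_mul]
    · rw [h2.neg_one_zpow, abs_neg, abs_one, one_mul]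
  rw [hsin]
  have hu2 : |u| ≤ 1/2 := abs_sub_round θ
  have h1 : 2 * |u| ≤ Real.sin (π * |u|) := by
    have h2 := Real.mul_le_sin (x := π * |u|) (by positivity) (by nlinarith [Real.pi_pos])
    have h3 : 2 / π * (π * |u|) = 2 * |u| := by field_simp
    linarith
  calc 2 * |u| ≤ Real.sin (π * |u|) := h1
  _ ≤ |Real.sin (π * |u|)| := le_abs_self _
  _ = |Real.sin (π * u)| := by
      rcases abs_choice u with h | h
      · rw [h]
      · rw [h]; rw [mul_neg, Real.sin_neg, abs_neg]

private lemma cos_upper (θ : ℝ) : Real.cos (2 * π * θ) ≤ 1 - 8 * |θ - round θ| ^ 2 := by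
  have h1 : Real.cos (2 * π * θ) = 1 - 2 * Real.sin (π * θ) ^ 2 := by
    have h : 2 * π * θ = 2 * (π * θ) := by ring
    rw [h, Real.cos_two_mul']
    nlinarith [Real.sin_sq_add_cos_sq (π * θ)]
  have h2 := sin_lower θ
  have h3 : (2 * |θ - round θ|) ^ 2 ≤ |Real.sin (π * θ)| ^ 2 := by
    apply pow_le_pow_left₀ (by positivity) h2
  rw [sq_abs] at h3
  nlinarith [abs_nonneg (θ - round θ)]

/-- For an integer `q ≥ 2` and `θ ∈ ℝ`,
`|(1/q) Σ_{n=0}^{q−1} exp(2πi n θ)|² ≤ 1 − (16(q−1)/q²)·‖θ‖²`,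
where `‖θ‖ = |θ − round θ|` is the distance from `θ` to the nearest integer. -/
theorem abs_sq_exponential_sum_le (q : ℕ) (hq : 2 ≤ q) (θ : ℝ) :
    (‖(q : ℂ)⁻¹ * ∑ n ∈ Finset.range q,
        Complex.exp (2 * Real.pi * Complex.I * (n : ℂ) * (θ : ℂ))‖) ^ 2 ≤
      1 - 16 * ((q : ℝ) - 1) / (q : ℝ) ^ 2 * |θ - round θ| ^ 2 := by
  set t := |θ - round θ| with ht
  have ht0 : 0 ≤ t := abs_nonneg _
  have main : ∀ m : ℕ, Complex.normSq (∑ n ∈ Finset.range m,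
      Complex.exp (2 * Real.pi * Complex.I * (n : ℂ) * (θ : ℂ)))
      ≤ (m : ℝ) ^ 2 - 16 * ((m : ℝ) - 1) * t ^ 2 := by
    intro m
    induction m with
    | zero => simp; nlinarith [sq_nonneg t]
    | succ m ih =>
      rcases Nat.eq_zero_or_pos m with rfl | hm
      · rw [Finset.sum_range_one, term_normSq θ 0]
        norm_num
      obtain ⟨k, rfl⟩ : ∃ k, m = k + 1 := ⟨m - 1, by omega⟩
      rw [Finset.sum_range_succ, Complex.normSq_add, term_normSq, Finset.sum_mul,
        Complex.re_sum]
      have hre : ∀ n ∈ Finset.range (k+1),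
          (Complex.exp (2 * Real.pi * Complex.I * (n : ℂ) * (θ : ℂ)) *
            (starRingEnd ℂ) (Complex.exp (2 * Real.pi * Complex.I * ((k+1 : ℕ) : ℂ) * (θ : ℂ)))).re
          = Real.cos (2 * π * ((n : ℝ) - ((k+1 : ℕ) : ℝ)) * θ) := fun n _ => term_re θ n (k+1)
      rw [Finset.sum_congr rfl hre]
      have hsum : ∑ n ∈ Finset.range (k+1), Real.cos (2 * π * ((n : ℝ) - ((k+1 : ℕ) : ℝ)) * θ)
          ≤ (k : ℝ) + Real.cos (2 * π * θ) := by
        rw [Finset.sum_range_succ]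
        have hlast : Real.cos (2 * π * ((k : ℝ) - ((k+1 : ℕ) : ℝ)) * θ) = Real.cos (2 * π * θ) := by
          have h : 2 * π * ((k : ℝ) - ((k+1 : ℕ) : ℝ)) * θ = -(2 * π * θ) := by
            push_cast; ring
          rw [h, Real.cos_neg]
        rw [hlast]
        have hrest : ∑ n ∈ Finset.range k, Real.cos (2 * π * ((n : ℝ) - ((k+1 : ℕ) : ℝ)) * θ)
            ≤ (k : ℝ) := by
          calc ∑ n ∈ Finset.range k, Real.cos (2 * π * ((n : ℝ) - ((k+1 : ℕ) : ℝ)) * θ)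
              ≤ ∑ _n ∈ Finset.range k, (1 : ℝ) :=
            Finset.sum_le_sum fun n _ => Real.cos_le_one _
          _ = (k : ℝ) := by simp
        linarith
      have hcos := cos_upper θ
      rw [← ht] at hcos
      push_cast at ih hsum ⊢
      nlinarith [hsum, hcos, ih]
  have hq0 : (0:ℝ) < (q:ℝ) := by positivity
  rw [Complex.sq_norm, Complex.normSq_mul, Complex.normSq_inv, Complex.normSq_natCast, ← sq]
  calc ((q:ℝ)^2)⁻¹ * Complex.normSq (∑ n ∈ Finset.range q,
        Complex.exp (2 * Real.pi * Complex.I * (n : ℂ) * (θ : ℂ)))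
      ≤ ((q:ℝ)^2)⁻¹ * ((q : ℝ) ^ 2 - 16 * ((q : ℝ) - 1) * t ^ 2) :=
        mul_le_mul_of_nonneg_left (main q) (by positivity)
  _ = 1 - 16 * ((q : ℝ) - 1) / (q : ℝ) ^ 2 * t ^ 2 := by
      field_simp
end

section
/- Let b ≥ 2, j ∈ ℕ, and let α₁, …, α_{j−1}, k ∈ {0, …, b−1}. Let J := [Σ_{r=1}^{j−1} α_r/b^r + k/b^j, Σ_{r=1}^{j−1} α_r/b^r + (k+1)/b^j). Then for v ∈ ℕ₀ with base-b digits v₀, v₁, v₂, …, the radical inverse φ_b(v) lies in J if and only if (v₀, …, v_{j−2}, v_{j−1}) = (α₁, …, α_{j−1}, k); equivalently, φ_b(v) ∈ J iff v ≡ R (mod b^j) for the unique R ∈ {0,…,b^j−1} with these first j digits. -/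
open Finset

/-- The `i`-th base-`b` digit of `v` (starting from `i = 0`). -/
def digit (b v i : ℕ) : ℕ := (Nat.digits b v).getD i 0

lemma digit_eq (b : ℕ) (hb : 2 ≤ b) (v i : ℕ) : digit b v i = v / b ^ i % b := by
  induction i generalizing v with
  | zero =>
    rcases Nat.eq_zero_or_pos v with h | h
    · simp [digit, h]
    · rw [digit, Nat.digits_def' (by omega : 1 < b) h]
      simp
  | succ i ih =>
    rcases Nat.eq_zero_or_pos v with h | h
    · simp [digit, h]
    · rw [digit, Nat.digits_def' (by omega : 1 < b) h, List.getD_cons_succ]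
      rw [← digit, ih]
      rw [Nat.div_div_eq_div_mul, ← pow_succ']

lemma digit_lt (b : ℕ) (hb : 2 ≤ b) (v i : ℕ) : digit b v i < b := by
  rw [digit_eq b hb]
  exact Nat.mod_lt _ (by omega)

lemma mod_pow_eq_sum (b : ℕ) (hb : 2 ≤ b) (v j : ℕ) :
    v % b ^ j = ∑ i ∈ Finset.range j, digit b v i * b ^ i := by
  induction j with
  | zero => simp [Nat.mod_one]
  | succ j ih =>
    rw [Finset.sum_range_succ, ← ih, digit_eq b hb]
    have h1 : v % b ^ (j + 1) = v % b ^ j + b ^ j * (v / b ^ j % b) := by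
      rw [pow_succ, Nat.mod_mul]
    rw [h1]; ring

lemma radInv_eq_sum (b v N : ℕ) (hN : (Nat.digits b v).length ≤ N) :
    radInv b v = ∑ i ∈ Finset.range N, (digit b v i : ℝ) / (b : ℝ) ^ (i + 1) := by
  unfold radInv digit
  apply Finset.sum_subset (Finset.range_subset_range.2 hN)
  intro i _ hi
  rw [Finset.mem_range, not_lt] at hi
  rw [List.getD_eq_default _ _ hi]
  simp

lemma sum_digits_le (b : ℕ) (hb : 2 ≤ b) (e : ℕ → ℕ) (he : ∀ i, e i < b) (m : ℕ) :
    ∑ i ∈ Finset.range m, (e i : ℝ) / (b : ℝ) ^ (i + 1) ≤ 1 - 1 / (b : ℝ) ^ m := by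
  have hb0 : (0 : ℝ) < (b : ℝ) := by exact_mod_cast (by omega : 0 < b)
  induction m with
  | zero => simp
  | succ m ih =>
    rw [Finset.sum_range_succ]
    have h1 : (e m : ℝ) ≤ (b : ℝ) - 1 := by
      have := he m
      have : (e m : ℝ) + 1 ≤ (b : ℝ) := by exact_mod_cast this
      linarith
    have hpow : (0 : ℝ) < (b : ℝ) ^ (m + 1) := by positivity
    have h2 : (e m : ℝ) / (b : ℝ) ^ (m + 1) ≤ ((b : ℝ) - 1) / (b : ℝ) ^ (m + 1) := by
      gcongr
    have h3 : 1 - 1 / (b : ℝ) ^ m + ((b : ℝ) - 1) / (b : ℝ) ^ (m + 1)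
        = 1 - 1 / (b : ℝ) ^ (m + 1) := by
      field_simp
      ring
    linarith

lemma nat_digits_unique (b : ℕ) (hb : 2 ≤ b) :
    ∀ (j : ℕ) (e f : ℕ → ℕ), (∀ i, i < j → e i < b) → (∀ i, i < j → f i < b) →
      ((∑ i ∈ Finset.range j, e i * b ^ i = ∑ i ∈ Finset.range j, f i * b ^ i) ↔
        ∀ i, i < j → e i = f i) := by
  intro j
  induction j with
  | zero => simp
  | succ j ih =>
    intro e f he hf
    have hsplit : ∀ g : ℕ → ℕ,
        ∑ i ∈ Finset.range (j + 1), g i * b ^ i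
          = g 0 + b * ∑ i ∈ Finset.range j, g (i + 1) * b ^ i := by
      intro g
      rw [Finset.sum_range_succ' (fun i => g i * b ^ i) j, Finset.mul_sum]
      rw [pow_zero, mul_one, add_comm]
      congr 1
      apply Finset.sum_congr rfl
      intro i _
      rw [pow_succ]
      ring
    rw [hsplit e, hsplit f]
    constructor
    · intro h
      have h0 : e 0 = f 0 := by
        have := congrArg (· % b) h
        simpa [Nat.add_mul_mod_self_left, Nat.mod_eq_of_lt (he 0 (by omega)),
          Nat.mod_eq_of_lt (hf 0 (by omega))] using this
      have htail : ∑ i ∈ Finset.range j, e (i + 1) * b ^ i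
          = ∑ i ∈ Finset.range j, f (i + 1) * b ^ i := by
        have hb0 : 0 < b := by omega
        have := h
        rw [h0] at this
        have := Nat.add_left_cancel this
        exact Nat.eq_of_mul_eq_mul_left hb0 this
      have := (ih (fun i => e (i + 1)) (fun i => f (i + 1))
        (fun i hi => he (i + 1) (by omega)) (fun i hi => hf (i + 1) (by omega))).mp htail
      intro i hi
      match i with
      | 0 => exact h0
      | Nat.succ i => exact this i (by omega)
    · intro h
      have h0 : e 0 = f 0 := h 0 (by omega)
      have : ∑ i ∈ Finset.range j, e (i + 1) * b ^ i
          = ∑ i ∈ Finset.range j, f (i + 1) * b ^ i :=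
        (ih (fun i => e (i + 1)) (fun i => f (i + 1))
          (fun i hi => he (i + 1) (by omega)) (fun i hi => hf (i + 1) (by omega))).mpr
          (fun i hi => h (i + 1) (by omega))
      rw [h0, this]

lemma sum_div_eq_nat (b : ℕ) (hb : 2 ≤ b) (e : ℕ → ℕ) (j : ℕ) :
    ∑ i ∈ Finset.range j, (e i : ℝ) / (b : ℝ) ^ (i + 1)
      = ((∑ i ∈ Finset.range j, e (j - 1 - i) * b ^ i : ℕ) : ℝ) / (b : ℝ) ^ j := by
  have hb0 : (0 : ℝ) < (b : ℝ) := by exact_mod_cast (by omega : 0 < b)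
  push_cast
  rw [Finset.sum_div, ← Finset.sum_range_reflect]
  apply Finset.sum_congr rfl
  intro i hi
  rw [Finset.mem_range] at hi
  have hbne : (b : ℝ) ≠ 0 := ne_of_gt hb0
  rw [show (b : ℝ) ^ j = (b : ℝ) ^ (j - 1 - i + 1) * (b : ℝ) ^ i by
    rw [← pow_add]; congr 1; omega]
  field_simp

lemma key_compare (b j : ℕ) (hb : 2 ≤ b) (E F : ℕ) (T : ℝ) (hT0 : 0 ≤ T)
    (hT1 : T < 1 / (b : ℝ) ^ j) :
    ((F : ℝ) / (b : ℝ) ^ j ≤ (E : ℝ) / (b : ℝ) ^ j + T ∧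
      (E : ℝ) / (b : ℝ) ^ j + T < (F : ℝ) / (b : ℝ) ^ j + 1 / (b : ℝ) ^ j) ↔ E = F := by
  have hbp : (0 : ℝ) < (b : ℝ) ^ j := by
    have : (0 : ℝ) < (b : ℝ) := by exact_mod_cast (by omega : 0 < b)
    positivity
  constructor
  · rintro ⟨h1, h2⟩
    have hEF : (E : ℝ) / (b : ℝ) ^ j < (F : ℝ) / (b : ℝ) ^ j + 1 / (b : ℝ) ^ j := by
      linarith
    have hFE : (F : ℝ) / (b : ℝ) ^ j < (E : ℝ) / (b : ℝ) ^ j + 1 / (b : ℝ) ^ j := by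
      linarith
    have h3 : (E : ℝ) < F + 1 := by
      have := mul_lt_mul_of_pos_right hEF hbp
      rw [div_mul_cancel₀ _ (ne_of_gt hbp), add_mul, div_mul_cancel₀ _ (ne_of_gt hbp),
        div_mul_cancel₀ _ (ne_of_gt hbp)] at this
      linarith
    have h4 : (F : ℝ) < E + 1 := by
      have := mul_lt_mul_of_pos_right hFE hbp
      rw [div_mul_cancel₀ _ (ne_of_gt hbp), add_mul, div_mul_cancel₀ _ (ne_of_gt hbp),
        div_mul_cancel₀ _ (ne_of_gt hbp)] at this
      linarith
    have h5 : E < F + 1 := by exact_mod_cast h3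
    have h6 : F < E + 1 := by exact_mod_cast h4
    omega
  · rintro rfl
    exact ⟨by linarith, by linarith⟩

/-- For `b ≥ 2`, `j ≥ 1`, digits `α₁,…,α_{j−1}, k ∈ {0,…,b−1}` and the
elementary interval `J = [L, L + 1/b^j)` with `L = Σ_{r=1}^{j−1} α_r/b^r + k/b^j`,
the radical inverse `φ_b(v)` lies in `J` iff the first `j` base-`b` digits of `v` are
`(α₁, …, α_{j−1}, k)`; equivalently, iff `v ≡ R (mod b^j)` for the unique residue `R`
with these first `j` digits. -/
theorem radInv_mem_elementary_interval_iff (b j : ℕ) (hb : 2 ≤ b) (hj : 1 ≤ j)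
    (α : ℕ → ℕ) (hα : ∀ r, 1 ≤ r → r ≤ j - 1 → α r < b) (k : ℕ) (hk : k < b) (v : ℕ) :
    (((∑ r ∈ Finset.Icc 1 (j - 1), (α r : ℝ) / (b : ℝ) ^ r) + (k : ℝ) / (b : ℝ) ^ j
        ≤ radInv b v ∧
      radInv b v <
        (∑ r ∈ Finset.Icc 1 (j - 1), (α r : ℝ) / (b : ℝ) ^ r) + ((k : ℝ) + 1) / (b : ℝ) ^ j)
      ↔ ((∀ i, i < j - 1 → digit b v i = α (i + 1)) ∧ digit b v (j - 1) = k))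
    ∧
    (((∑ r ∈ Finset.Icc 1 (j - 1), (α r : ℝ) / (b : ℝ) ^ r) + (k : ℝ) / (b : ℝ) ^ j
        ≤ radInv b v ∧
      radInv b v <
        (∑ r ∈ Finset.Icc 1 (j - 1), (α r : ℝ) / (b : ℝ) ^ r) + ((k : ℝ) + 1) / (b : ℝ) ^ j)
      ↔ v % b ^ j = (∑ r ∈ Finset.Icc 1 (j - 1), α r * b ^ (r - 1)) + k * b ^ (j - 1)) := by
  -- setup
  have hb0 : (0 : ℝ) < (b : ℝ) := by exact_mod_cast (by omega : 0 < b)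
  have hbne : (b : ℝ) ≠ 0 := ne_of_gt hb0
  have hbj : (0 : ℝ) < (b : ℝ) ^ j := by positivity
  set d : ℕ → ℕ := fun i => digit b v i with hd_def
  set f : ℕ → ℕ := fun i => if i = j - 1 then k else α (i + 1) with hf_def
  have hd : ∀ i, d i < b := fun i => digit_lt b hb v i
  have hf : ∀ i, i < j → f i < b := by
    intro i hi
    by_cases h : i = j - 1
    · simp [hf_def, h, hk]
    · simp only [hf_def, if_neg h]
      exact hα (i + 1) (by omega) (by omega)
  -- the left endpoint as a digit sum
  have hL : (∑ r ∈ Finset.Icc 1 (j - 1), (α r : ℝ) / (b : ℝ) ^ r) + (k : ℝ) / (b : ℝ) ^ j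
      = ∑ i ∈ Finset.range j, (f i : ℝ) / (b : ℝ) ^ (i + 1) := by
    obtain ⟨m, rfl⟩ : ∃ m, j = m + 1 := ⟨j - 1, by omega⟩
    rw [Finset.sum_range_succ]
    have h1 : f m = k := by simp [hf_def]
    rw [h1]
    congr 1
    rw [show (m + 1) - 1 = m from rfl, ← Finset.Ico_add_one_right_eq_Icc, Finset.sum_Ico_eq_sum_range]
    apply Finset.sum_congr rfl
    intro i hi
    rw [Finset.mem_range] at hi
    have h2 : f i = α (i + 1) := by
      simp only [hf_def]
      rw [if_neg (by omega)]
    rw [show 1 + i = i + 1 by omega, ← h2]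
  -- the residue as a digit sum
  have hM : (∑ r ∈ Finset.Icc 1 (j - 1), α r * b ^ (r - 1)) + k * b ^ (j - 1)
      = ∑ i ∈ Finset.range j, f i * b ^ i := by
    obtain ⟨m, rfl⟩ : ∃ m, j = m + 1 := ⟨j - 1, by omega⟩
    rw [Finset.sum_range_succ]
    have h1 : f m = k := by simp [hf_def]
    rw [h1]
    congr 1
    rw [show (m + 1) - 1 = m from rfl, ← Finset.Ico_add_one_right_eq_Icc, Finset.sum_Ico_eq_sum_range]
    apply Finset.sum_congr rfl
    intro i hi
    rw [Finset.mem_range] at hi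
    have h2 : f i = α (i + 1) := by
      simp only [hf_def]
      rw [if_neg (by omega)]
    rw [show 1 + i = i + 1 by omega, ← h2, Nat.add_sub_cancel]
  -- split radInv into head and tail
  set n : ℕ := max (Nat.digits b v).length j with hn_def
  set T : ℝ := ∑ i ∈ Finset.Ico j n, (d i : ℝ) / (b : ℝ) ^ (i + 1) with hT_def
  have hsplit : radInv b v = (∑ i ∈ Finset.range j, (d i : ℝ) / (b : ℝ) ^ (i + 1)) + T := by
    rw [radInv_eq_sum b v n (le_max_left _ _),
      ← Finset.sum_range_add_sum_Ico _ (le_max_right (Nat.digits b v).length j)]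
  have hT0 : 0 ≤ T := by
    apply Finset.sum_nonneg
    intro i _
    positivity
  have hT1 : T < 1 / (b : ℝ) ^ j := by
    have hrw : T = (1 / (b : ℝ) ^ j) *
        ∑ i ∈ Finset.range (n - j), (d (j + i) : ℝ) / (b : ℝ) ^ (i + 1) := by
      rw [hT_def, Finset.sum_Ico_eq_sum_range, Finset.mul_sum]
      apply Finset.sum_congr rfl
      intro i _
      rw [show (b : ℝ) ^ (j + i + 1) = (b : ℝ) ^ j * (b : ℝ) ^ (i + 1) by
        rw [← pow_add, add_assoc]]
      field_simp
    have hle : ∑ i ∈ Finset.range (n - j), (d (j + i) : ℝ) / (b : ℝ) ^ (i + 1)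
        ≤ 1 - 1 / (b : ℝ) ^ (n - j) :=
      sum_digits_le b hb (fun i => d (j + i)) (fun i => hd (j + i)) (n - j)
    have hpos : (0 : ℝ) < 1 / (b : ℝ) ^ (n - j) := by positivity
    have : (1 / (b : ℝ) ^ j) * (1 - 1 / (b : ℝ) ^ (n - j)) < 1 / (b : ℝ) ^ j := by
      have h1 : 1 - 1 / (b : ℝ) ^ (n - j) < 1 := by linarith
      have h2 : (0 : ℝ) < 1 / (b : ℝ) ^ j := by positivity
      nlinarith
    calc T = (1 / (b : ℝ) ^ j) *
        ∑ i ∈ Finset.range (n - j), (d (j + i) : ℝ) / (b : ℝ) ^ (i + 1) := hrw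
      _ ≤ (1 / (b : ℝ) ^ j) * (1 - 1 / (b : ℝ) ^ (n - j)) := by
          apply mul_le_mul_of_nonneg_left hle (by positivity)
      _ < 1 / (b : ℝ) ^ j := this
  -- reflected natural numbers
  set D : ℕ := ∑ i ∈ Finset.range j, d (j - 1 - i) * b ^ i with hD_def
  set F : ℕ := ∑ i ∈ Finset.range j, f (j - 1 - i) * b ^ i with hF_def
  have hDd : ∑ i ∈ Finset.range j, (d i : ℝ) / (b : ℝ) ^ (i + 1) = (D : ℝ) / (b : ℝ) ^ j :=
    sum_div_eq_nat b hb d j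
  have hFf : ∑ i ∈ Finset.range j, (f i : ℝ) / (b : ℝ) ^ (i + 1) = (F : ℝ) / (b : ℝ) ^ j :=
    sum_div_eq_nat b hb f j
  -- central equivalence
  have central :
      (((∑ r ∈ Finset.Icc 1 (j - 1), (α r : ℝ) / (b : ℝ) ^ r) + (k : ℝ) / (b : ℝ) ^ j
        ≤ radInv b v ∧
      radInv b v <
        (∑ r ∈ Finset.Icc 1 (j - 1), (α r : ℝ) / (b : ℝ) ^ r) + ((k : ℝ) + 1) / (b : ℝ) ^ j)
      ↔ ∀ i, i < j → d i = f i) := by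
    have hub : (∑ r ∈ Finset.Icc 1 (j - 1), (α r : ℝ) / (b : ℝ) ^ r)
        + ((k : ℝ) + 1) / (b : ℝ) ^ j
        = (F : ℝ) / (b : ℝ) ^ j + 1 / (b : ℝ) ^ j := by
      rw [← hFf, ← hL]
      ring
    constructor
    · rintro ⟨h1, h2⟩
      rw [hL, hFf] at h1
      rw [hub] at h2
      rw [hsplit, hDd] at h1 h2
      have hDF : D = F := (key_compare b j hb D F T hT0 hT1).mp ⟨h1, h2⟩
      have hrefl : ∀ i, i < j → d (j - 1 - i) = f (j - 1 - i) := by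
        rw [← nat_digits_unique b hb j (fun i => d (j - 1 - i)) (fun i => f (j - 1 - i))
          (fun i _ => hd _) (fun i hi => hf _ (by omega))]
        exact hDF
      intro i hi
      have := hrefl (j - 1 - i) (by omega)
      rwa [show j - 1 - (j - 1 - i) = i by omega] at this
    · intro h
      have hDF : D = F := by
        rw [hD_def, hF_def]
        apply Finset.sum_congr rfl
        intro i hi
        rw [Finset.mem_range] at hi
        rw [h (j - 1 - i) (by omega)]
      constructor
      · rw [hL, hFf, hsplit, hDd, hDF]
        linarith
      · rw [hub, hsplit, hDd, hDF]
        linarith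
  constructor
  · rw [central]
    constructor
    · intro h
      constructor
      · intro i hi
        have := h i (by omega)
        rw [hf_def] at this
        simpa [if_neg (by omega : ¬ i = j - 1)] using this
      · have := h (j - 1) (by omega)
        rw [hf_def] at this
        simpa using this
    · rintro ⟨h1, h2⟩ i hi
      by_cases hij : i = j - 1
      · subst hij
        simp only [hf_def, if_pos rfl]
        exact h2
      · simp only [hf_def, if_neg hij]
        exact h1 i (by omega)
  · rw [central, hM, mod_pow_eq_sum b hb v j]
    exact (nat_digits_unique b hb j d f (fun i _ => hd i) hf).symm
end
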